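/- Let r ≥ 1 be an integer, let κ < (ln 2)/r be a nonnegative real, and let (σ_k)_{k≥0} be a sequence of nonnegative reals satisfying σ_k ≤ Σ_{ℓ=0}^{k-1} (rκ)^{k-ℓ}/(k-ℓ)! · σ_ℓ for all k ≥ 1. If δ ∈ (0,1) satisfies κ < δ·(ln 2)/r, then σ_k ≤ σ_0·δ^k for all k ≥ 0. -/

import Mathlib

theorem stmt0 (r : ℕ) (hr : 1 ≤ r) (κ : ℝ) (hκ0 : 0 ≤ κ)
    (hκ : κ < Real.log 2 / r) (σ : ℕ → ℝ) (hσ : ∀ k, 0 ≤ σ k)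
    (hrec : ∀ k, 1 ≤ k →
      σ k ≤ ∑ ℓ ∈ Finset.range k,
        ((r : ℝ) * κ) ^ (k - ℓ) / (Nat.factorial (k - ℓ) : ℝ) * σ ℓ)
    (δ : ℝ) (hδ : δ ∈ Set.Ioo (0 : ℝ) 1) (hκδ : κ < δ * Real.log 2 / r) :
    ∀ k, σ k ≤ σ 0 * δ ^ k := by
  obtain ⟨hδ0, hδ1⟩ := hδ
  have hr0 : (0:ℝ) < r := by exact_mod_cast Nat.lt_of_lt_of_le Nat.zero_lt_one hr
  set x : ℝ := (r : ℝ) * κ / δ with hxdef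
  have hx0 : 0 ≤ x := by positivity
  have hxlt : x < Real.log 2 := by
    rw [div_lt_iff₀ hδ0]
    have h : κ * r < δ * Real.log 2 := (lt_div_iff₀ hr0).mp hκδ
    nlinarith
  have hexp : Real.exp x < 2 := by
    calc Real.exp x < Real.exp (Real.log 2) := Real.exp_lt_exp.mpr hxlt
    _ = 2 := Real.exp_log (by norm_num)
  have key : ∀ k, ∑ ℓ ∈ Finset.range k, x ^ (k-ℓ) / (Nat.factorial (k-ℓ) : ℝ) ≤ 1 := by
    intro k
    have h1 : ∑ ℓ ∈ Finset.range k, x ^ (k-ℓ) / (Nat.factorial (k-ℓ) : ℝ)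
        = ∑ j ∈ Finset.range k, x ^ (j+1) / (Nat.factorial (j+1) : ℝ) := by
      rw [← Finset.sum_range_reflect (fun j => x ^ (j+1) / (Nat.factorial (j+1) : ℝ)) k]
      apply Finset.sum_congr rfl
      intro ℓ hℓ
      have hℓk : ℓ < k := Finset.mem_range.mp hℓ
      have : k - ℓ = (k - 1 - ℓ) + 1 := by omega
      rw [this]
    have h2 : ∑ j ∈ Finset.range (k+1), x ^ j / (Nat.factorial j : ℝ)
        = (∑ j ∈ Finset.range k, x ^ (j+1) / (Nat.factorial (j+1) : ℝ)) + 1 := by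
      rw [Finset.sum_range_succ']
      simp
    have h3 : ∑ j ∈ Finset.range (k+1), x ^ j / (Nat.factorial j : ℝ) ≤ Real.exp x :=
      Real.sum_le_exp_of_nonneg hx0 (k+1)
    rw [h1]
    linarith
  intro k
  induction k using Nat.strong_induction_on with
  | _ k ih =>
    rcases Nat.eq_zero_or_pos k with h0 | h1
    · subst h0; simp
    · calc σ k ≤ ∑ ℓ ∈ Finset.range k,
          ((r : ℝ) * κ) ^ (k - ℓ) / (Nat.factorial (k - ℓ) : ℝ) * σ ℓ := hrec k h1
      _ ≤ ∑ ℓ ∈ Finset.range k,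
          ((r : ℝ) * κ) ^ (k - ℓ) / (Nat.factorial (k - ℓ) : ℝ) * (σ 0 * δ ^ ℓ) := by
          apply Finset.sum_le_sum
          intro ℓ hℓ
          have hℓk : ℓ < k := Finset.mem_range.mp hℓ
          exact mul_le_mul_of_nonneg_left (ih ℓ hℓk) (by positivity)
      _ = σ 0 * δ ^ k * ∑ ℓ ∈ Finset.range k, x ^ (k-ℓ) / (Nat.factorial (k-ℓ) : ℝ) := by
          rw [Finset.mul_sum]
          apply Finset.sum_congr rfl
          intro ℓ hℓ
          have hℓk : ℓ < k := Finset.mem_range.mp hℓ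
          have hδk : δ ^ k = δ ^ ℓ * δ ^ (k - ℓ) := by
            rw [← pow_add]; congr 1; omega
          have hdne : δ ^ (k - ℓ) ≠ 0 := by positivity
          rw [hxdef, div_pow, hδk]
          field_simp
      _ ≤ σ 0 * δ ^ k * 1 := by
          apply mul_le_mul_of_nonneg_left (key k)
          have := hσ 0; positivity
      _ = σ 0 * δ ^ k := mul_one _
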